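/- Assume the inequality system {x ∈ K : f_j(x) ≤ a_j for all j} satisfies the Slater condition. If x̂ is weak Pareto optimal for the multi-objective problem of minimizing (f_1,…,f_m) over K and satisfies f_j(x̂) ≤ a_j for all j, then there exist parameters α_1,…,α_m ≥ 0, not all zero, such that x̂ solves the Cobb-Douglas scalarized problem: ∏_{j=1}^m (a_j − f_j(x̂))^{α_j} ≥ ∏_{j=1}^m (a_j − f_j(x))^{α_j} for every x ∈ K with f_j(x) ≤ a_j for all j (and h_CD(x̂) ≥ h_CD(x) for all x ∈ K, where h_CD(x) = −∞ whenever f_j(x) > a_j for some j). -/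

import Mathlib

open Classical in
/-- The Cobb-Douglas scalarized objective: `∏ j, (a j − f j x) ^ (α j)` when `f j x ≤ a j` for
all `j`, and `−∞` otherwise. -/
noncomputable def hCD {n m : ℕ} (f : Fin m → (Fin n → ℝ) → ℝ) (a : Fin m → ℝ)
    (α : Fin m → ℝ) (x : Fin n → ℝ) : EReal :=
  if ∀ j, f j x ≤ a j then (((∏ j, (a j - f j x) ^ (α j)) : ℝ) : EReal) else ⊥


private lemma sep_lemma {n m : ℕ} (K : Set (Fin n → ℝ)) (hKconv : Convex ℝ K)
    (f : Fin m → (Fin n → ℝ) → ℝ) (hf : ∀ j, ConvexOn ℝ Set.univ (f j))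
    (xhat : Fin n → ℝ) (hxK : xhat ∈ K)
    (hW : ∀ y ∈ K, ∃ j, f j xhat ≤ f j y) :
    ∃ lam : Fin m → ℝ, (∀ j, 0 ≤ lam j) ∧ 0 < ∑ j, lam j ∧
      ∀ x ∈ K, ∑ j, lam j * f j xhat ≤ ∑ j, lam j * f j x := by
  classical
  set C : Set (Fin m → ℝ) := {z | ∃ x ∈ K, ∀ j, f j x - f j xhat < z j} with hCdef
  have hCopen : IsOpen C := by
    have : C = ⋃ x ∈ K, Set.univ.pi fun j => Set.Ioi (f j x - f j xhat) := by
      ext z; simp [hCdef, Set.mem_pi]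
    rw [this]
    exact isOpen_biUnion fun x _ => isOpen_set_pi Set.finite_univ fun j _ => isOpen_Ioi
  have hCconv : Convex ℝ C := by
    rintro z₁ ⟨x₁, hx₁, h₁⟩ z₂ ⟨x₂, hx₂, h₂⟩ t s ht hs hts
    refine ⟨t • x₁ + s • x₂, hKconv hx₁ hx₂ ht hs hts, fun j => ?_⟩
    have h1 := (hf j).2 (Set.mem_univ x₁) (Set.mem_univ x₂) ht hs hts
    simp only [smul_eq_mul] at h1
    have e3 : t * f j xhat + s * f j xhat = f j xhat := by
      rw [← add_mul, hts, one_mul]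
    rcases eq_or_lt_of_le ht with ht0 | ht0
    · have hs1 : s = 1 := by linarith
      have h2 := mul_lt_mul_of_pos_left (h₂ j) (by linarith : (0:ℝ) < s)
      have e1 : t * z₁ j = 0 := by rw [← ht0]; ring
      have e2 : t * f j x₁ = 0 := by rw [← ht0]; ring
      have e4 : t * f j xhat = 0 := by rw [← ht0]; ring
      simp only [Pi.add_apply, Pi.smul_apply, smul_eq_mul]
      linarith
    · have h2 := mul_lt_mul_of_pos_left (h₁ j) ht0
      have h3 := mul_le_mul_of_nonneg_left (h₂ j).le hs
      simp only [Pi.add_apply, Pi.smul_apply, smul_eq_mul]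
      linarith
  have h0 : (0 : Fin m → ℝ) ∉ C := by
    rintro ⟨x, hx, hlt⟩
    obtain ⟨j, hj⟩ := hW x hx
    have := hlt j
    simp only [Pi.zero_apply] at this
    linarith
  obtain ⟨φ, hφ⟩ := geometric_hahn_banach_open_point hCconv hCopen h0
  set e : Fin m → Fin m → ℝ := fun j k => if j = k then 1 else 0 with hedef
  set lam : Fin m → ℝ := fun j => -φ (e j) with hlamdef
  have hφz : ∀ z : Fin m → ℝ, φ z = ∑ j, z j * φ (e j) := by
    intro z
    conv_lhs => rw [pi_eq_sum_univ z]
    rw [map_sum]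
    simp [smul_eq_mul, hedef]
  have hC : ∀ z ∈ C, 0 < ∑ j, lam j * z j := by
    intro z hz
    have h1 := hφ z hz
    rw [map_zero, hφz] at h1
    have h2 : ∑ j, lam j * z j = -∑ j, z j * φ (e j) := by
      rw [← Finset.sum_neg_distrib]
      exact Finset.sum_congr rfl fun j _ => by simp [hlamdef]; ring
    rw [h2]; linarith
  have hS : 0 < ∑ j, lam j := by
    have := hC (fun _ => (1:ℝ)) ⟨xhat, hxK, by simp⟩
    simpa using this
  have hnn : ∀ j, 0 ≤ lam j := by
    intro j
    by_contra h
    push_neg at h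
    set T : ℝ := (2 * ∑ i, lam i) / (-lam j) with hTdef
    have hT : 0 < T := div_pos (by linarith) (by linarith)
    have hmem : (fun i => 1 + (if i = j then T else 0)) ∈ C := by
      refine ⟨xhat, hxK, fun i => ?_⟩
      have : (0:ℝ) < 1 + (if i = j then T else 0) := by split_ifs <;> linarith
      simpa using this
    have h1 := hC _ hmem
    have h2 : ∑ i, lam i * (1 + (if i = j then T else 0))
        = (∑ i, lam i) + lam j * T := by
      have : ∀ i ∈ Finset.univ, lam i * (1 + (if i = j then T else 0))
          = lam i + (if i = j then lam i * T else 0) := by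
        intro i _; split_ifs <;> ring
      rw [Finset.sum_congr rfl this, Finset.sum_add_distrib, Finset.sum_ite_eq' Finset.univ j]
      simp
    rw [h2] at h1
    have hne : -lam j ≠ 0 := by intro hc; rw [neg_eq_zero] at hc; exact absurd hc (ne_of_lt h)
    have h3 : lam j * T = -(2 * ∑ i, lam i) := by
      rw [hTdef, mul_div_assoc']
      rw [div_eq_iff hne]; ring
    rw [h3] at h1; linarith
  refine ⟨lam, hnn, hS, fun x hx => ?_⟩
  by_contra h
  push_neg at h
  set D : ℝ := (∑ j, lam j * f j x) - ∑ j, lam j * f j xhat with hDdef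
  have hD : D < 0 := by simp only [hDdef]; linarith
  set ε : ℝ := -D / (2 * ∑ i, lam i) with hεdef
  have hε : 0 < ε := div_pos (by linarith) (by linarith)
  have hmem : (fun j => f j x - f j xhat + ε) ∈ C :=
    ⟨x, hx, fun j => by show f j x - f j xhat < f j x - f j xhat + ε; linarith⟩
  have h1 := hC _ hmem
  have h2 : ∑ j, lam j * (f j x - f j xhat + ε)
      = D + ε * ∑ i, lam i := by
    have : ∀ j ∈ Finset.univ, lam j * (f j x - f j xhat + ε)
        = (lam j * f j x - lam j * f j xhat) + ε * lam j := by intro j _; ring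
    rw [Finset.sum_congr rfl this, Finset.sum_add_distrib, Finset.sum_sub_distrib,
      ← Finset.mul_sum]
  rw [h2] at h1
  have h3 : ε * ∑ i, lam i = -D / 2 := by
    rw [hεdef]; field_simp
  rw [h3] at h1; linarith

private lemma prod_lemma {m : ℕ} (u v lam : Fin m → ℝ) (hu : ∀ j, 0 ≤ u j)
    (hv : ∀ j, 0 ≤ v j) (hl : ∀ j, 0 ≤ lam j)
    (hsum : ∑ j, lam j * u j ≤ ∑ j, lam j * v j) :
    ∏ j, u j ^ (lam j * v j) ≤ ∏ j, v j ^ (lam j * v j) := by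
  classical
  by_cases hA : ∃ j, 0 < lam j * v j ∧ u j = 0
  · obtain ⟨j, hαj, huj⟩ := hA
    have h0 : ∏ j, u j ^ (lam j * v j) = 0 :=
      Finset.prod_eq_zero (Finset.mem_univ j)
        (by rw [huj, Real.zero_rpow (ne_of_gt hαj)])
    rw [h0]
    exact Finset.prod_nonneg fun j _ => Real.rpow_nonneg (hv j) _
  · push_neg at hA
    have hfu : ∀ j, 0 < u j ^ (lam j * v j) := by
      intro j
      rcases eq_or_lt_of_le (mul_nonneg (hl j) (hv j)) with hα | hα
      · rw [← hα, Real.rpow_zero]; norm_num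
      · exact Real.rpow_pos_of_pos ((hu j).lt_of_ne' (hA j hα)) _
    have hfv : ∀ j, 0 < v j ^ (lam j * v j) := by
      intro j
      rcases eq_or_lt_of_le (mul_nonneg (hl j) (hv j)) with hα | hα
      · rw [← hα, Real.rpow_zero]; norm_num
      · have hvp : 0 < v j := by
          rcases (hv j).lt_or_eq with h | h
          · exact h
          · exfalso; rw [← h] at hα; simp at hα
        exact Real.rpow_pos_of_pos hvp _
    have hPu : 0 < ∏ j, u j ^ (lam j * v j) := Finset.prod_pos fun j _ => hfu j
    have hPv : 0 < ∏ j, v j ^ (lam j * v j) := Finset.prod_pos fun j _ => hfv j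
    have hlog : Real.log (∏ j, u j ^ (lam j * v j))
        ≤ Real.log (∏ j, v j ^ (lam j * v j)) := by
      rw [Real.log_prod (fun j _ => (hfu j).ne'),
        Real.log_prod (fun j _ => (hfv j).ne')]
      have termwise : ∀ j ∈ Finset.univ,
          Real.log (u j ^ (lam j * v j))
            ≤ Real.log (v j ^ (lam j * v j)) + lam j * (u j - v j) := by
        intro j _
        rcases eq_or_lt_of_le (mul_nonneg (hl j) (hv j)) with hα | hα
        · rw [← hα, Real.rpow_zero, Real.rpow_zero, Real.log_one]
          rcases mul_eq_zero.1 hα.symm with h | h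
          · rw [h]; ring_nf; simp
          · rw [h]; ring_nf; nlinarith [mul_nonneg (hl j) (hu j)]
        · have hup : 0 < u j := (hu j).lt_of_ne' (hA j hα)
          have hvp : 0 < v j := by
            rcases (hv j).lt_or_eq with h | h
            · exact h
            · exfalso; rw [← h] at hα; simp at hα
          rw [Real.log_rpow hup, Real.log_rpow hvp]
          have hl1 := Real.log_le_sub_one_of_pos (div_pos hup hvp)
          rw [Real.log_div hup.ne' hvp.ne'] at hl1
          have h2 := mul_le_mul_of_nonneg_left hl1 hα.le
          have h3 : (lam j * v j) * (u j / v j - 1) = lam j * (u j - v j) := by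
            field_simp
          nlinarith [h2, h3]
      calc ∑ j, Real.log (u j ^ (lam j * v j))
          ≤ ∑ j, (Real.log (v j ^ (lam j * v j)) + lam j * (u j - v j)) :=
            Finset.sum_le_sum termwise
        _ = (∑ j, Real.log (v j ^ (lam j * v j))) + ∑ j, lam j * (u j - v j) :=
            Finset.sum_add_distrib
        _ ≤ ∑ j, Real.log (v j ^ (lam j * v j)) := by
            have : ∑ j, lam j * (u j - v j) ≤ 0 := by
              have e : ∀ j ∈ Finset.univ, lam j * (u j - v j)
                  = lam j * u j - lam j * v j := fun j _ => by ring
              rw [Finset.sum_congr rfl e, Finset.sum_sub_distrib]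
              linarith
            linarith
    calc ∏ j, u j ^ (lam j * v j) = Real.exp (Real.log (∏ j, u j ^ (lam j * v j))) :=
          (Real.exp_log hPu).symm
      _ ≤ Real.exp (Real.log (∏ j, v j ^ (lam j * v j))) := Real.exp_le_exp.2 hlog
      _ = ∏ j, v j ^ (lam j * v j) := Real.exp_log hPv

/-- Under the Slater condition, any weak Pareto optimal point that is feasible for the
inequality system solves the Cobb-Douglas scalarized problem for suitable nonnegative,
not-all-zero parameters `α`. -/
theorem stmt_12 {n m : ℕ} (K : Set (Fin n → ℝ)) (hKne : K.Nonempty)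
    (hKcl : IsClosed K) (hKconv : Convex ℝ K)
    (f : Fin m → (Fin n → ℝ) → ℝ) (hf : ∀ j, ConvexOn ℝ Set.univ (f j))
    (a : Fin m → ℝ)
    (hSlater : ∃ x ∈ K, ∀ j, f j x < a j)
    (xhat : Fin n → ℝ) (hxK : xhat ∈ K)
    (hW : ∀ y ∈ K, ∃ j, f j xhat ≤ f j y)
    (hxa : ∀ j, f j xhat ≤ a j) :
    ∃ α : Fin m → ℝ, (∀ j, 0 ≤ α j) ∧ (∃ j, α j ≠ 0) ∧
      (∀ x ∈ K, (∀ j, f j x ≤ a j) →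
        ∏ j, (a j - f j x) ^ (α j) ≤ ∏ j, (a j - f j xhat) ^ (α j)) ∧
      (∀ x ∈ K, hCD f a α x ≤ hCD f a α xhat) := by
  classical
  obtain ⟨xbar, hxbarK, hxbar⟩ := hSlater
  obtain ⟨lam, hlnn, hlS, hkey⟩ := sep_lemma K hKconv f hf xhat hxK hW
  set α : Fin m → ℝ := fun j => lam j * (a j - f j xhat) with hαdef
  have hαnn : ∀ j, 0 ≤ α j := fun j => mul_nonneg (hlnn j) (sub_nonneg.2 (hxa j))
  -- some α is nonzero
  obtain ⟨j0, _, hj0⟩ := Finset.exists_lt_of_sum_lt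
    (show ∑ j, (0:ℝ) < ∑ j, lam j by simpa using hlS)
  have hstr : ∑ j, lam j * f j xbar < ∑ j, lam j * a j :=
    Finset.sum_lt_sum (fun j _ => mul_le_mul_of_nonneg_left (hxbar j).le (hlnn j))
      ⟨j0, Finset.mem_univ _, mul_lt_mul_of_pos_left (hxbar j0) hj0⟩
  have hsplit : ∑ j, α j = (∑ j, lam j * a j) - ∑ j, lam j * f j xhat := by
    rw [← Finset.sum_sub_distrib]
    exact Finset.sum_congr rfl fun j _ => mul_sub _ _ _
  have hsumpos : 0 < ∑ j, α j := by
    have h1 := hkey xbar hxbarK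
    rw [hsplit]; linarith
  obtain ⟨j1, _, hj1⟩ := Finset.exists_ne_zero_of_sum_ne_zero hsumpos.ne'
  -- main product inequality
  have hprod : ∀ x ∈ K, (∀ j, f j x ≤ a j) →
      ∏ j, (a j - f j x) ^ (α j) ≤ ∏ j, (a j - f j xhat) ^ (α j) := by
    intro x hx hxfeas
    have hsum2 : ∑ j, lam j * (a j - f j x) ≤ ∑ j, lam j * (a j - f j xhat) := by
      have e : ∀ g : Fin n → ℝ, ∑ j, lam j * (a j - f j g)
          = (∑ j, lam j * a j) - ∑ j, lam j * f j g := by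
        intro g
        rw [← Finset.sum_sub_distrib]
        exact Finset.sum_congr rfl fun j _ => mul_sub _ _ _
      rw [e x, e xhat]
      have := hkey x hx
      linarith
    exact prod_lemma (fun j => a j - f j x) (fun j => a j - f j xhat) lam
      (fun j => sub_nonneg.2 (hxfeas j)) (fun j => sub_nonneg.2 (hxa j)) hlnn hsum2
  refine ⟨α, hαnn, ⟨j1, hj1⟩, hprod, fun x hx => ?_⟩
  by_cases h : ∀ j, f j x ≤ a j
  · unfold hCD
    rw [if_pos h, if_pos hxa]
    exact_mod_cast hprod x hx h
  · unfold hCD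
    rw [if_neg h]
    exact bot_le
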